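/- Every first-countable paratopological gyrogroup is ω-balanced. -/

import Mathlib

open Pointwise

/-- A gyrogroup: a groupoid with identity, inverses, gyroautomorphisms satisfying
the left gyroassociative law and the left loop property. -/
class Gyrogroup (G : Type*) extends Zero G, Neg G, Add G where
  zero_add : ∀ a : G, 0 + a = a
  add_zero : ∀ a : G, a + 0 = a
  neg_add_cancel : ∀ a : G, -a + a = 0
  add_neg_cancel : ∀ a : G, a + -a = 0
  gyr : G → G → G → G
  gyr_bijective : ∀ a b : G, Function.Bijective (gyr a b)
  gyr_add : ∀ a b x y : G, gyr a b (x + y) = gyr a b x + gyr a b y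
  gyrassoc : ∀ a b c : G, a + (b + c) = a + b + gyr a b c
  loop : ∀ a b : G, gyr (a + b) b = gyr a b

/-- A family γ of neighborhoods of 0 is subordinated to U if for all x, y there are
members V₁, V₂ of γ with ⊖(x⊕y)⊕((V₁⊕x)⊕y) ⊆ U and V₂ ⊆ ⊖(x⊕y)⊕((U⊕x)⊕y). -/
def Subordinated {G : Type*} [Add G] [Neg G] (γ : Set (Set G)) (U : Set G) : Prop :=
  (∀ x y : G, ∃ V ∈ γ, {-(x + y)} + ((V + {x}) + {y}) ⊆ U) ∧
  (∀ x y : G, ∃ V ∈ γ, V ⊆ {-(x + y)} + ((U + {x}) + {y}))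

/-- A paratopological gyrogroup is ω-balanced if every neighborhood of the identity
has a countable subordinated family of open neighborhoods of the identity. -/
def OmegaBalanced (G : Type*) [Add G] [Neg G] [Zero G] [TopologicalSpace G] : Prop :=
  ∀ U ∈ nhds (0 : G), ∃ γ : Set (Set G), γ.Countable ∧
    (∀ V ∈ γ, IsOpen V ∧ (0 : G) ∈ V) ∧ Subordinated γ U

namespace GyroAux

variable {G : Type*} [Gyrogroup G]

local notation "gyr" => Gyrogroup.gyr

private lemma za (a : G) : 0 + a = a := Gyrogroup.zero_add a
private lemma az (a : G) : a + 0 = a := Gyrogroup.add_zero a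
private lemma nac (a : G) : -a + a = 0 := Gyrogroup.neg_add_cancel a
private lemma anc (a : G) : a + -a = 0 := Gyrogroup.add_neg_cancel a
private lemma ga (a b c : G) : a + (b + c) = a + b + gyr a b c := Gyrogroup.gyrassoc a b c

private lemma neg_add_eq_gyr (a b : G) : -a + (a + b) = gyr (-a) a b := by
  rw [ga, nac, za]

/-- Left cancellation. -/
private lemma lcan {a b c : G} (h : a + b = a + c) : b = c := by
  have h2 : gyr (-a) a b = gyr (-a) a c := by
    rw [← neg_add_eq_gyr, ← neg_add_eq_gyr, h]
  exact (Gyrogroup.gyr_bijective (-a) a).1 h2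

private lemma gyr_id_left (b c : G) : gyr (0 : G) b c = c := by
  have h := ga (0 : G) b c
  rw [za, za] at h
  exact (lcan h).symm

private lemma gyr_neg_self (a c : G) : gyr (-a) a c = c := by
  have h := Gyrogroup.loop (-a) a
  rw [nac] at h
  rw [← h, gyr_id_left]

private lemma gyr_self_neg (a c : G) : gyr a (-a) c = c := by
  have h := Gyrogroup.loop a (-a)
  rw [anc] at h
  rw [← h, gyr_id_left]

/-- First left cancellation law. -/
private lemma lc (a b : G) : -a + (a + b) = b := by
  rw [neg_add_eq_gyr, gyr_neg_self]

/-- Second left cancellation law. -/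
private lemma lc2 (a b : G) : a + (-a + b) = b := by
  rw [ga, anc, za, gyr_self_neg]

private lemma negneg (a : G) : -(-a) = a := by
  have h : -a + -(-a) = -a + a := by rw [anc, nac]
  exact lcan h

/-- The key identity: `gyr c (b + c)` is a left inverse of `gyr b c`. -/
private lemma key (b c d : G) : gyr c (b + c) (gyr b c d) = d := by
  have hA : -b + (b + c + gyr b c d) = c + d := by
    rw [← ga, lc]
  have hB : -b + (b + c + gyr b c d) = c + gyr (-b) (b + c) (gyr b c d) := by
    rw [ga (-b) (b + c) (gyr b c d), lc]
  have hC : gyr (-b) (b + c) (gyr b c d) = d := lcan (hB.symm.trans hA)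
  have hD : gyr c (b + c) = gyr (-b) (b + c) := by
    have h := Gyrogroup.loop (-b) (b + c)
    rw [lc] at h
    exact h
  rw [hD, hC]

/-- The left Bol identity. -/
private lemma bol (a z d : G) : a + (z + (a + d)) = (a + (z + a)) + d := by
  calc a + (z + (a + d)) = a + ((z + a) + gyr z a d) := by rw [← ga]
    _ = (a + (z + a)) + gyr a (z + a) (gyr z a d) := ga a (z + a) (gyr z a d)
    _ = (a + (z + a)) + d := by rw [key]

private lemma bolInst (a z : G) : (a + (z + a)) + -a = a + z := by
  have h := bol a z (-a)
  rw [anc, az] at h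
  exact h.symm

/-- The candidate inverse of right translation by `x`. -/
def phi (x w : G) : G := -x + ((x + w) + -x)

lemma phi_add (x w : G) : phi x (w + x) = w := by
  unfold phi
  rw [bolInst x w, lc]

private lemma addR_inj (x : G) {u v : G} (h : u + x = v + x) : u = v := by
  have := congrArg (phi x) h
  rwa [phi_add, phi_add] at this

private lemma phi_inj (x : G) {u v : G} (h : phi x u = phi x v) : u = v := by
  unfold phi at h
  have h1 : (x + u) + -x = (x + v) + -x := lcan h
  have h2 : x + u = x + v := addR_inj (-x) h1
  exact lcan h2

lemma add_phi (x w : G) : phi x w + x = w := by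
  have h : phi x (phi x w + x) = phi x w := phi_add x (phi x w)
  exact phi_inj x h

end GyroAux

open GyroAux

section Topology

set_option linter.unusedSectionVars false

variable {G : Type*} [Gyrogroup G] [TopologicalSpace G] [ContinuousAdd G]

/-- The map `v ↦ ⊖(x⊕y) ⊕ ((v⊕x)⊕y)`. -/
def hmap (x y v : G) : G := -(x + y) + ((v + x) + y)

/-- The inverse of `hmap`. -/
def kmap (x y w : G) : G := phi x (phi y ((x + y) + w))

lemma kmap_hmap (x y v : G) : kmap x y (hmap x y v) = v := by
  unfold kmap hmap
  rw [lc2, phi_add, phi_add]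

lemma hmap_kmap (x y w : G) : hmap x y (kmap x y w) = w := by
  unfold kmap hmap
  rw [add_phi, add_phi, lc]

lemma hmap_zero (x y : G) : hmap x y 0 = 0 := by
  unfold hmap
  rw [Gyrogroup.zero_add, Gyrogroup.neg_add_cancel]

lemma kmap_zero (x y : G) : kmap x y 0 = 0 := by
  have h := kmap_hmap x y 0
  rwa [hmap_zero] at h

lemma continuous_hmap (x y : G) : Continuous (hmap x y) := by
  unfold hmap
  exact continuous_const.add (((continuous_id.add continuous_const)).add continuous_const)

lemma continuous_phi (x : G) : Continuous (phi x) := by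
  unfold GyroAux.phi
  exact continuous_const.add ((continuous_const.add continuous_id).add continuous_const)

lemma continuous_kmap (x y : G) : Continuous (kmap x y) := by
  unfold kmap
  exact (continuous_phi x).comp ((continuous_phi y).comp (continuous_const.add continuous_id))

lemma set_form (x y : G) (V : Set G) :
    {-(x + y)} + ((V + {x}) + {y}) = hmap x y '' V := by
  rw [Set.add_singleton, Set.add_singleton, Set.singleton_add, Set.image_image,
    Set.image_image]
  rfl

lemma image_eq_preimage (x y : G) (U : Set G) : hmap x y '' U = kmap x y ⁻¹' U := by
  ext w
  constructor
  · rintro ⟨v, hv, rfl⟩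
    simpa [kmap_hmap] using hv
  · intro hw
    exact ⟨kmap x y w, hw, hmap_kmap x y w⟩

end Topology

/-- Every first-countable paratopological gyrogroup is ω-balanced. -/
theorem omegaBalanced_of_firstCountable {G : Type*} [Gyrogroup G] [TopologicalSpace G]
    [ContinuousAdd G] [FirstCountableTopology G] : OmegaBalanced G := by
  intro U hU
  obtain ⟨B, hB⟩ := (nhds (0 : G)).exists_antitone_basis
  refine ⟨Set.range (fun n => interior (B n)), Set.countable_range _, ?_, ?_, ?_⟩
  · rintro V ⟨n, rfl⟩
    exact ⟨isOpen_interior,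
      mem_interior_iff_mem_nhds.2 (hB.toHasBasis.mem_of_mem trivial)⟩
  · intro x y
    have hpre : hmap x y ⁻¹' U ∈ nhds (0 : G) := by
      apply (continuous_hmap x y).continuousAt.preimage_mem_nhds
      rw [hmap_zero]
      exact hU
    obtain ⟨n, -, hn⟩ := hB.toHasBasis.mem_iff.1 hpre
    refine ⟨interior (B n), ⟨n, rfl⟩, ?_⟩
    rw [set_form]
    exact (Set.image_mono (interior_subset.trans hn)).trans
      (Set.image_preimage_subset _ _)
  · intro x y
    have him : hmap x y '' U ∈ nhds (0 : G) := by
      rw [image_eq_preimage]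
      apply (continuous_kmap x y).continuousAt.preimage_mem_nhds
      rw [kmap_zero]
      exact hU
    obtain ⟨n, -, hn⟩ := hB.toHasBasis.mem_iff.1 him
    refine ⟨interior (B n), ⟨n, rfl⟩, ?_⟩
    rw [set_form]
    exact interior_subset.trans hn
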